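/- Suppose Φ has a 𝒟-pullback attractor 𝒜 ∈ 𝒟. Then for every ω₁ ∈ Ω₁ and ω₂ ∈ Ω₂, 𝒜(ω₁,ω₂) = { ψ(0,ω₁,ω₂) : ψ is a 𝒟-complete orbit of Φ }. -/

import Mathlib

open MeasureTheory Filter Set Topology
open scoped ENNReal

namespace RDS

/-- A group of transformations of `α` parametrized by `ℝ`. -/
def IsGroupAction {α : Type*} (θ : ℝ → α → α) : Prop :=
  (∀ a, θ 0 a = a) ∧ ∀ s t : ℝ, ∀ a, θ (s + t) a = θ t (θ s a)

variable {Ω₁ Ω₂ X : Type*} [MetricSpace X] [MeasurableSpace X] [MeasurableSpace Ω₂]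

/-- A continuous cocycle on `X` over the parametric dynamical systems
`(Ω₁, θ₁)` and `(Ω₂, ℱ₂, P, θ₂)` (Definition 2.1). -/
structure IsCocycle (θ₁ : ℝ → Ω₁ → Ω₁) (θ₂ : ℝ → Ω₂ → Ω₂)
    (Φ : ℝ → Ω₁ → Ω₂ → X → X) : Prop where
  measurable : ∀ ω₁ : Ω₁,
    Measurable fun p : {t : ℝ // 0 ≤ t} × Ω₂ × X => Φ p.1.1 ω₁ p.2.1 p.2.2
  map_zero : ∀ (ω₁ : Ω₁) (ω₂ : Ω₂) (x : X), Φ 0 ω₁ ω₂ x = x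
  cocycle : ∀ t τ : ℝ, 0 ≤ t → 0 ≤ τ → ∀ (ω₁ : Ω₁) (ω₂ : Ω₂) (x : X),
    Φ (t + τ) ω₁ ω₂ x = Φ t (θ₁ τ ω₁) (θ₂ τ ω₂) (Φ τ ω₁ ω₂ x)
  continuous : ∀ t : ℝ, 0 ≤ t → ∀ (ω₁ : Ω₁) (ω₂ : Ω₂),
    Continuous fun x : X => Φ t ω₁ ω₂ x

/-- A complete orbit of the cocycle `Φ` (Definition 2.9). -/
def IsCompleteOrbit (θ₁ : ℝ → Ω₁ → Ω₁) (θ₂ : ℝ → Ω₂ → Ω₂)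
    (Φ : ℝ → Ω₁ → Ω₂ → X → X) (ψ : ℝ → Ω₁ → Ω₂ → X) : Prop :=
  ∀ t τ : ℝ, 0 ≤ t → ∀ (ω₁ : Ω₁) (ω₂ : Ω₂),
    Φ t (θ₁ τ ω₁) (θ₂ τ ω₂) (ψ τ ω₁ ω₂) = ψ (t + τ) ω₁ ω₂

/-- A `𝒟`-complete orbit of `Φ`. -/
def IsDCompleteOrbit (θ₁ : ℝ → Ω₁ → Ω₁) (θ₂ : ℝ → Ω₂ → Ω₂)
    (Φ : ℝ → Ω₁ → Ω₂ → X → X) (𝒟 : Set (Ω₁ → Ω₂ → Set X))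
    (ψ : ℝ → Ω₁ → Ω₂ → X) : Prop :=
  IsCompleteOrbit θ₁ θ₂ Φ ψ ∧
    ∃ D ∈ 𝒟, ∀ (t : ℝ) (ω₁ : Ω₁) (ω₂ : Ω₂), ψ t ω₁ ω₂ ∈ D (θ₁ t ω₁) (θ₂ t ω₂)

/-- Positive invariance of a family under `Φ`. -/
def PositivelyInvariant (θ₁ : ℝ → Ω₁ → Ω₁) (θ₂ : ℝ → Ω₂ → Ω₂)
    (Φ : ℝ → Ω₁ → Ω₂ → X → X) (B : Ω₁ → Ω₂ → Set X) : Prop :=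
  ∀ t : ℝ, 0 ≤ t → ∀ (ω₁ : Ω₁) (ω₂ : Ω₂),
    Φ t ω₁ ω₂ '' B ω₁ ω₂ ⊆ B (θ₁ t ω₁) (θ₂ t ω₂)

/-- Invariance of a family under `Φ`. -/
def Invariant (θ₁ : ℝ → Ω₁ → Ω₁) (θ₂ : ℝ → Ω₂ → Ω₂)
    (Φ : ℝ → Ω₁ → Ω₂ → X → X) (B : Ω₁ → Ω₂ → Set X) : Prop :=
  ∀ t : ℝ, 0 ≤ t → ∀ (ω₁ : Ω₁) (ω₂ : Ω₂),
    Φ t ω₁ ω₂ '' B ω₁ ω₂ = B (θ₁ t ω₁) (θ₂ t ω₂)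

/-- Quasi-invariance of a family under `Φ`. -/
def QuasiInvariant (θ₁ : ℝ → Ω₁ → Ω₁) (θ₂ : ℝ → Ω₂ → Ω₂)
    (Φ : ℝ → Ω₁ → Ω₂ → X → X) (B : Ω₁ → Ω₂ → Set X) : Prop :=
  ∀ y : Ω₁ → Ω₂ → X, (∀ (ω₁ : Ω₁) (ω₂ : Ω₂), y ω₁ ω₂ ∈ B ω₁ ω₂) →
    ∃ ψ : ℝ → Ω₁ → Ω₂ → X, IsCompleteOrbit θ₁ θ₂ Φ ψ ∧
      (∀ (ω₁ : Ω₁) (ω₂ : Ω₂), ψ 0 ω₁ ω₂ = y ω₁ ω₂) ∧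
      ∀ (t : ℝ) (ω₁ : Ω₁) (ω₂ : Ω₂), ψ t ω₁ ω₂ ∈ B (θ₁ t ω₁) (θ₂ t ω₂)

/-- The Ω-limit set of a family `B` (Definition 2.13). -/
def omegaLimit (θ₁ : ℝ → Ω₁ → Ω₁) (θ₂ : ℝ → Ω₂ → Ω₂)
    (Φ : ℝ → Ω₁ → Ω₂ → X → X) (B : Ω₁ → Ω₂ → Set X) (ω₁ : Ω₁) (ω₂ : Ω₂) : Set X :=
  ⋂ τ ∈ Ici (0 : ℝ), closure (⋃ t ∈ Ici τ,
    Φ t (θ₁ (-t) ω₁) (θ₂ (-t) ω₂) '' B (θ₁ (-t) ω₁) (θ₂ (-t) ω₂))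

/-- `𝒟` is a collection of families of nonempty subsets of `X`. -/
def FamiliesOfNonemptySets (𝒟 : Set (Ω₁ → Ω₂ → Set X)) : Prop :=
  ∀ D ∈ 𝒟, ∀ (ω₁ : Ω₁) (ω₂ : Ω₂), (D ω₁ ω₂).Nonempty

/-- Neighborhood closedness of the collection `𝒟` (Definition 2.5). -/
def NeighborhoodClosed (𝒟 : Set (Ω₁ → Ω₂ → Set X)) : Prop :=
  ∀ D ∈ 𝒟, ∃ ε : ℝ, 0 < ε ∧ ∀ B : Ω₁ → Ω₂ → Set X,
    (∀ (ω₁ : Ω₁) (ω₂ : Ω₂), (B ω₁ ω₂).Nonempty ∧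
      B ω₁ ω₂ ⊆ Metric.thickening ε (D ω₁ ω₂)) → B ∈ 𝒟

/-- Inclusion closedness of the collection `𝒟`. -/
def InclusionClosed (𝒟 : Set (Ω₁ → Ω₂ → Set X)) : Prop :=
  ∀ D ∈ 𝒟, ∀ B : Ω₁ → Ω₂ → Set X,
    (∀ (ω₁ : Ω₁) (ω₂ : Ω₂), (B ω₁ ω₂).Nonempty ∧ B ω₁ ω₂ ⊆ D ω₁ ω₂) → B ∈ 𝒟

/-- `𝒟`-pullback asymptotic compactness of `Φ` (Definition 2.16). -/
def AsymptoticallyCompact (θ₁ : ℝ → Ω₁ → Ω₁) (θ₂ : ℝ → Ω₂ → Ω₂)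
    (Φ : ℝ → Ω₁ → Ω₂ → X → X) (𝒟 : Set (Ω₁ → Ω₂ → Set X)) : Prop :=
  ∀ (ω₁ : Ω₁) (ω₂ : Ω₂), ∀ B ∈ 𝒟, ∀ (t : ℕ → ℝ) (x : ℕ → X),
    Tendsto t atTop atTop →
    (∀ n, x n ∈ B (θ₁ (-t n) ω₁) (θ₂ (-t n) ω₂)) →
    ∃ (φ : ℕ → ℕ) (y : X), StrictMono φ ∧
      Tendsto (fun n => Φ (t (φ n)) (θ₁ (-t (φ n)) ω₁) (θ₂ (-t (φ n)) ω₂) (x (φ n)))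
        atTop (𝓝 y)

/-- The Hausdorff semi-metric `d(C,B) = sup_{x ∈ C} inf_{b ∈ B} d(x,b)`,
valued in `ℝ≥0∞`. -/
noncomputable def hausSemidist (C B : Set X) : ℝ≥0∞ :=
  ⨆ x ∈ C, EMetric.infEdist x B

/-- The family `A` pullback attracts the family `B` under `Φ`. -/
def Attracts (θ₁ : ℝ → Ω₁ → Ω₁) (θ₂ : ℝ → Ω₂ → Ω₂)
    (Φ : ℝ → Ω₁ → Ω₂ → X → X) (B A : Ω₁ → Ω₂ → Set X) : Prop :=
  ∀ (ω₁ : Ω₁) (ω₂ : Ω₂),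
    Tendsto (fun t : ℝ => hausSemidist
        (Φ t (θ₁ (-t) ω₁) (θ₂ (-t) ω₂) '' B (θ₁ (-t) ω₁) (θ₂ (-t) ω₂)) (A ω₁ ω₂))
      atTop (𝓝 0)

/-- A `𝒟`-pullback absorbing set for `Φ` (Definition 2.15). -/
def IsAbsorbingSet (θ₁ : ℝ → Ω₁ → Ω₁) (θ₂ : ℝ → Ω₂ → Ω₂)
    (Φ : ℝ → Ω₁ → Ω₂ → X → X) (𝒟 : Set (Ω₁ → Ω₂ → Set X))
    (K : Ω₁ → Ω₂ → Set X) : Prop :=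
  K ∈ 𝒟 ∧ ∀ (ω₁ : Ω₁) (ω₂ : Ω₂), ∀ B ∈ 𝒟, ∃ T : ℝ, 0 < T ∧ ∀ t : ℝ, T ≤ t →
    Φ t (θ₁ (-t) ω₁) (θ₂ (-t) ω₂) '' B (θ₁ (-t) ω₁) (θ₂ (-t) ω₂) ⊆ K ω₁ ω₂

/-- A closed measurable (w.r.t. the `P`-completion of `ℱ₂`) `𝒟`-pullback
absorbing set for `Φ`. -/
def IsClosedMeasurableAbsorbingSet (θ₁ : ℝ → Ω₁ → Ω₁) (θ₂ : ℝ → Ω₂ → Ω₂)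
    (Φ : ℝ → Ω₁ → Ω₂ → X → X) (P : Measure Ω₂) (𝒟 : Set (Ω₁ → Ω₂ → Set X))
    (K : Ω₁ → Ω₂ → Set X) : Prop :=
  IsAbsorbingSet θ₁ θ₂ Φ 𝒟 K ∧
    (∀ (ω₁ : Ω₁) (ω₂ : Ω₂), IsClosed (K ω₁ ω₂) ∧ (K ω₁ ω₂).Nonempty) ∧
    ∀ (ω₁ : Ω₁) (x : X), NullMeasurable (fun ω₂ => Metric.infDist x (K ω₁ ω₂)) P

/-- A `𝒟`-pullback attractor for `Φ` (Definition 2.17). -/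
structure IsPullbackAttractor (θ₁ : ℝ → Ω₁ → Ω₁) (θ₂ : ℝ → Ω₂ → Ω₂)
    (Φ : ℝ → Ω₁ → Ω₂ → X → X) (P : Measure Ω₂) (𝒟 : Set (Ω₁ → Ω₂ → Set X))
    (A : Ω₁ → Ω₂ → Set X) : Prop where
  mem : A ∈ 𝒟
  compact : ∀ (ω₁ : Ω₁) (ω₂ : Ω₂), IsCompact (A ω₁ ω₂)
  measurable : ∀ (ω₁ : Ω₁) (x : X),
    NullMeasurable (fun ω₂ => Metric.infDist x (A ω₁ ω₂)) P
  invariant : Invariant θ₁ θ₂ Φ A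
  attracts : ∀ B ∈ 𝒟, Attracts θ₁ θ₂ Φ B A

/-- Through every point of an invariant family one can draw a complete orbit
(componentwise, for a fixed pair `(ω₁, ω₂)`) staying in the family. -/
lemma exists_component_orbit
    {Ω₁ Ω₂ X : Type*} [MetricSpace X]
    (θ₁ : ℝ → Ω₁ → Ω₁) (θ₂ : ℝ → Ω₂ → Ω₂)
    (hθ₁ : IsGroupAction θ₁) (hθ₂ : IsGroupAction θ₂)
    (Φ : ℝ → Ω₁ → Ω₂ → X → X)
    (hmz : ∀ (ω₁ : Ω₁) (ω₂ : Ω₂) (x : X), Φ 0 ω₁ ω₂ x = x)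
    (hcoc : ∀ t τ : ℝ, 0 ≤ t → 0 ≤ τ → ∀ (ω₁ : Ω₁) (ω₂ : Ω₂) (x : X),
      Φ (t + τ) ω₁ ω₂ x = Φ t (θ₁ τ ω₁) (θ₂ τ ω₂) (Φ τ ω₁ ω₂ x))
    (A : Ω₁ → Ω₂ → Set X)
    (hinv : ∀ t : ℝ, 0 ≤ t → ∀ (ω₁ : Ω₁) (ω₂ : Ω₂),
      Φ t ω₁ ω₂ '' A ω₁ ω₂ = A (θ₁ t ω₁) (θ₂ t ω₂))
    (ω₁ : Ω₁) (ω₂ : Ω₂) (x : X) (hx : x ∈ A ω₁ ω₂) :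
    ∃ g : ℝ → X, g 0 = x ∧
      (∀ t τ : ℝ, 0 ≤ t → Φ t (θ₁ τ ω₁) (θ₂ τ ω₂) (g τ) = g (t + τ)) ∧
      ∀ t : ℝ, g t ∈ A (θ₁ t ω₁) (θ₂ t ω₂) := by
  have θ₁add : ∀ (s t : ℝ) (ω : Ω₁), θ₁ t (θ₁ s ω) = θ₁ (s + t) ω :=
    fun s t ω => (hθ₁.2 s t ω).symm
  have θ₂add : ∀ (s t : ℝ) (ω : Ω₂), θ₂ t (θ₂ s ω) = θ₂ (s + t) ω :=
    fun s t ω => (hθ₂.2 s t ω).symm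
  -- a backward chain of preimages through the invariant family
  obtain ⟨z, hz0, hzmem, hzstep⟩ :
      ∃ z : ℕ → X, z 0 = x ∧
        (∀ n : ℕ, z n ∈ A (θ₁ (-(n : ℝ)) ω₁) (θ₂ (-(n : ℝ)) ω₂)) ∧
        ∀ n : ℕ, Φ 1 (θ₁ (-((n : ℝ) + 1)) ω₁) (θ₂ (-((n : ℝ) + 1)) ω₂) (z (n + 1))
          = z n := by
    set S : ℕ → Set X := fun n => A (θ₁ (-(n : ℝ)) ω₁) (θ₂ (-(n : ℝ)) ω₂) with hS
    have surj : ∀ n : ℕ, ∀ y ∈ S n, ∃ w ∈ S (n + 1),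
        Φ 1 (θ₁ (-((n : ℝ) + 1)) ω₁) (θ₂ (-((n : ℝ) + 1)) ω₂) w = y := by
      intro n y hy
      have h1 := hinv 1 zero_le_one (θ₁ (-((n : ℝ) + 1)) ω₁) (θ₂ (-((n : ℝ) + 1)) ω₂)
      have e1 : θ₁ 1 (θ₁ (-((n : ℝ) + 1)) ω₁) = θ₁ (-(n : ℝ)) ω₁ := by
        rw [θ₁add]
        have : (-((n : ℝ) + 1) + 1 : ℝ) = -(n : ℝ) := by ring
        rw [this]
      have e2 : θ₂ 1 (θ₂ (-((n : ℝ) + 1)) ω₂) = θ₂ (-(n : ℝ)) ω₂ := by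
        rw [θ₂add]
        have : (-((n : ℝ) + 1) + 1 : ℝ) = -(n : ℝ) := by ring
        rw [this]
      rw [e1, e2] at h1
      have hy' : y ∈ Φ 1 (θ₁ (-((n : ℝ) + 1)) ω₁) (θ₂ (-((n : ℝ) + 1)) ω₂) ''
          A (θ₁ (-((n : ℝ) + 1)) ω₁) (θ₂ (-((n : ℝ) + 1)) ω₂) := by
        rw [h1]; exact hy
      obtain ⟨w, hw, hww⟩ := hy'
      refine ⟨w, ?_, hww⟩
      have hc : ((n + 1 : ℕ) : ℝ) = (n : ℝ) + 1 := by push_cast; ring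
      simp only [hS, hc]
      exact hw
    have hx0 : x ∈ S 0 := by
      have h0 : (-(((0 : ℕ)) : ℝ)) = (0 : ℝ) := by norm_num
      simp only [hS, h0, hθ₁.1, hθ₂.1]
      exact hx
    let F : ∀ n : ℕ, {y : X // y ∈ S n} := fun n =>
      Nat.rec ⟨x, hx0⟩
        (fun n p => ⟨(surj n p.1 p.2).choose, (surj n p.1 p.2).choose_spec.1⟩) n
    refine ⟨fun n => (F n).1, rfl, fun n => (F n).2, fun n => ?_⟩
    exact (surj n (F n).1 (F n).2).choose_spec.2
  -- well-definedness of the forward extension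
  have step : ∀ (t : ℝ) (n : ℕ), 0 ≤ t + n →
      Φ (t + ((n + 1 : ℕ) : ℝ)) (θ₁ (-((n + 1 : ℕ) : ℝ)) ω₁)
          (θ₂ (-((n + 1 : ℕ) : ℝ)) ω₂) (z (n + 1))
        = Φ (t + (n : ℝ)) (θ₁ (-(n : ℝ)) ω₁) (θ₂ (-(n : ℝ)) ω₂) (z n) := by
    intro t n h
    have hc : ((n + 1 : ℕ) : ℝ) = (n : ℝ) + 1 := by push_cast; ring
    rw [hc]
    have ht : t + ((n : ℝ) + 1) = (t + (n : ℝ)) + 1 := by ring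
    rw [ht, hcoc (t + n) 1 h zero_le_one]
    have e1 : θ₁ 1 (θ₁ (-((n : ℝ) + 1)) ω₁) = θ₁ (-(n : ℝ)) ω₁ := by
      rw [θ₁add]
      have : (-((n : ℝ) + 1) + 1 : ℝ) = -(n : ℝ) := by ring
      rw [this]
    have e2 : θ₂ 1 (θ₂ (-((n : ℝ) + 1)) ω₂) = θ₂ (-(n : ℝ)) ω₂ := by
      rw [θ₂add]
      have : (-((n : ℝ) + 1) + 1 : ℝ) = -(n : ℝ) := by ring
      rw [this]
    rw [e1, e2, hzstep n]
  have stepLe : ∀ (t : ℝ) (n m : ℕ), n ≤ m → 0 ≤ t + n →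
      Φ (t + (m : ℝ)) (θ₁ (-(m : ℝ)) ω₁) (θ₂ (-(m : ℝ)) ω₂) (z m)
        = Φ (t + (n : ℝ)) (θ₁ (-(n : ℝ)) ω₁) (θ₂ (-(n : ℝ)) ω₂) (z n) := by
    intro t n m hnm h
    induction m, hnm using Nat.le_induction with
    | base => rfl
    | succ m hnm ih =>
      have hm : 0 ≤ t + (m : ℝ) := by
        have : (n : ℝ) ≤ (m : ℝ) := by exact_mod_cast hnm
        linarith
      rw [step t m hm, ih]
  have eqv : ∀ (t : ℝ) (n m : ℕ), 0 ≤ t + n → 0 ≤ t + m →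
      Φ (t + (n : ℝ)) (θ₁ (-(n : ℝ)) ω₁) (θ₂ (-(n : ℝ)) ω₂) (z n)
        = Φ (t + (m : ℝ)) (θ₁ (-(m : ℝ)) ω₁) (θ₂ (-(m : ℝ)) ω₂) (z m) := by
    intro t n m hn hm
    rcases le_total n m with h | h
    · exact (stepLe t n m h hn).symm
    · exact stepLe t m n h hm
  have hpos : ∀ t : ℝ, 0 ≤ t + ((⌈-t⌉₊ : ℕ) : ℝ) := by
    intro t
    have := Nat.le_ceil (-t)
    linarith
  refine ⟨fun t => Φ (t + ((⌈-t⌉₊ : ℕ) : ℝ)) (θ₁ (-((⌈-t⌉₊ : ℕ) : ℝ)) ω₁)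
      (θ₂ (-((⌈-t⌉₊ : ℕ) : ℝ)) ω₂) (z ⌈-t⌉₊), ?_, ?_, ?_⟩
  · show Φ (0 + ((⌈-(0:ℝ)⌉₊ : ℕ) : ℝ)) _ _ _ = x
    rw [eqv 0 ⌈-(0:ℝ)⌉₊ 0 (hpos 0) (by norm_num)]
    have h0 : (((0 : ℕ)) : ℝ) = (0 : ℝ) := by norm_num
    rw [h0, add_zero, neg_zero, hθ₁.1, hθ₂.1, hz0, hmz]
  · intro t τ ht
    show Φ t (θ₁ τ ω₁) (θ₂ τ ω₂)
        (Φ (τ + ((⌈-τ⌉₊ : ℕ) : ℝ)) (θ₁ (-((⌈-τ⌉₊ : ℕ) : ℝ)) ω₁)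
          (θ₂ (-((⌈-τ⌉₊ : ℕ) : ℝ)) ω₂) (z ⌈-τ⌉₊)) = _
    set n : ℕ := ⌈-τ⌉₊ with hn
    have hτn : 0 ≤ τ + (n : ℝ) := hpos τ
    have e1 : θ₁ (τ + (n : ℝ)) (θ₁ (-(n : ℝ)) ω₁) = θ₁ τ ω₁ := by
      rw [θ₁add]
      have : (-(n : ℝ) + (τ + (n : ℝ)) : ℝ) = τ := by ring
      rw [this]
    have e2 : θ₂ (τ + (n : ℝ)) (θ₂ (-(n : ℝ)) ω₂) = θ₂ τ ω₂ := by
      rw [θ₂add]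
      have : (-(n : ℝ) + (τ + (n : ℝ)) : ℝ) = τ := by ring
      rw [this]
    rw [← e1, ← e2, ← hcoc t (τ + (n : ℝ)) ht hτn]
    have ht2 : t + (τ + (n : ℝ)) = (t + τ) + (n : ℝ) := by ring
    rw [ht2]
    have h2 : 0 ≤ (t + τ) + (n : ℝ) := by linarith
    rw [eqv (t + τ) n ⌈-(t + τ)⌉₊ h2 (hpos (t + τ))]
  · intro t
    show Φ (t + ((⌈-t⌉₊ : ℕ) : ℝ)) (θ₁ (-((⌈-t⌉₊ : ℕ) : ℝ)) ω₁)
        (θ₂ (-((⌈-t⌉₊ : ℕ) : ℝ)) ω₂) (z ⌈-t⌉₊) ∈ _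
    set n : ℕ := ⌈-t⌉₊ with hn
    have h := hpos t
    have h1 := hinv (t + (n : ℝ)) h (θ₁ (-(n : ℝ)) ω₁) (θ₂ (-(n : ℝ)) ω₂)
    have e1 : θ₁ (t + (n : ℝ)) (θ₁ (-(n : ℝ)) ω₁) = θ₁ t ω₁ := by
      rw [θ₁add]
      have : (-(n : ℝ) + (t + (n : ℝ)) : ℝ) = t := by ring
      rw [this]
    have e2 : θ₂ (t + (n : ℝ)) (θ₂ (-(n : ℝ)) ω₂) = θ₂ t ω₂ := by
      rw [θ₂add]
      have : (-(n : ℝ) + (t + (n : ℝ)) : ℝ) = t := by ring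
      rw [this]
    rw [e1, e2] at h1
    rw [← h1]
    exact mem_image_of_mem _ (hzmem n)

theorem attractor_eq_completeOrbits
    {Ω₁ Ω₂ X : Type*} [Nonempty Ω₁]
    [MetricSpace X] [CompleteSpace X] [SecondCountableTopology X]
    [MeasurableSpace X] [BorelSpace X]
    [MeasurableSpace Ω₂] (P : Measure Ω₂) [IsProbabilityMeasure P]
    (θ₁ : ℝ → Ω₁ → Ω₁) (θ₂ : ℝ → Ω₂ → Ω₂)
    (hθ₁ : IsGroupAction θ₁) (hθ₂ : IsGroupAction θ₂)
    (hθ₂meas : Measurable fun p : ℝ × Ω₂ => θ₂ p.1 p.2)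
    (hθ₂pres : ∀ t : ℝ, MeasurePreserving (θ₂ t) P P)
    (Φ : ℝ → Ω₁ → Ω₂ → X → X)
    (hΦ : IsCocycle θ₁ θ₂ Φ)
    (𝒟 : Set (Ω₁ → Ω₂ → Set X))
    (h𝒟ne : FamiliesOfNonemptySets 𝒟)
    (A : Ω₁ → Ω₂ → Set X)
    (hA : IsPullbackAttractor θ₁ θ₂ Φ P 𝒟 A) :
    ∀ (ω₁ : Ω₁) (ω₂ : Ω₂),
      A ω₁ ω₂ = {x : X | ∃ ψ : ℝ → Ω₁ → Ω₂ → X,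
        IsDCompleteOrbit θ₁ θ₂ Φ 𝒟 ψ ∧ ψ 0 ω₁ ω₂ = x} := by
  classical
  intro ω₁ ω₂
  ext x
  simp only [mem_setOf_eq]
  constructor
  · intro hx
    have hAne : ∀ (ω₁' : Ω₁) (ω₂' : Ω₂), (A ω₁' ω₂').Nonempty := h𝒟ne A hA.mem
    have comp := exists_component_orbit θ₁ θ₂ hθ₁ hθ₂ Φ hΦ.map_zero hΦ.cocycle A
      hA.invariant
    have compAll : ∀ (ω₁' : Ω₁) (ω₂' : Ω₂), ∃ g : ℝ → X,
        (∀ t τ : ℝ, 0 ≤ t → Φ t (θ₁ τ ω₁') (θ₂ τ ω₂') (g τ) = g (t + τ)) ∧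
        ∀ t : ℝ, g t ∈ A (θ₁ t ω₁') (θ₂ t ω₂') := by
      intro ω₁' ω₂'
      obtain ⟨g, _, h2, h3⟩ := comp ω₁' ω₂' _ (hAne ω₁' ω₂').choose_spec
      exact ⟨g, h2, h3⟩
    choose G hGorb hGmem using compAll
    obtain ⟨g, hg0, hgorb, hgmem⟩ := comp ω₁ ω₂ x hx
    refine ⟨fun t ω₁' ω₂' => if h : ω₁' = ω₁ ∧ ω₂' = ω₂ then g t else G ω₁' ω₂' t,
      ⟨?_, A, hA.mem, ?_⟩, ?_⟩
    · intro t τ ht ω₁' ω₂'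
      by_cases h : ω₁' = ω₁ ∧ ω₂' = ω₂
      · simp only [dif_pos h]
        obtain ⟨h1, h2⟩ := h
        subst h1; subst h2
        exact hgorb t τ ht
      · simp only [dif_neg h]
        exact hGorb ω₁' ω₂' t τ ht
    · intro t ω₁' ω₂'
      by_cases h : ω₁' = ω₁ ∧ ω₂' = ω₂
      · simp only [dif_pos h]
        obtain ⟨h1, h2⟩ := h
        subst h1; subst h2
        exact hgmem t
      · simp only [dif_neg h]
        exact hGmem ω₁' ω₂' t
    · simp only [dif_pos (⟨rfl, rfl⟩ : ω₁ = ω₁ ∧ ω₂ = ω₂)]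
      exact hg0
  · rintro ⟨ψ, ⟨horb, D, hD, hmem⟩, rfl⟩
    have hAcl : IsClosed (A ω₁ ω₂) := (hA.compact ω₁ ω₂).isClosed
    have key : ∀ t : ℝ, 0 ≤ t →
        ψ 0 ω₁ ω₂ ∈ Φ t (θ₁ (-t) ω₁) (θ₂ (-t) ω₂) '' D (θ₁ (-t) ω₁) (θ₂ (-t) ω₂) := by
      intro t ht
      refine ⟨ψ (-t) ω₁ ω₂, hmem (-t) ω₁ ω₂, ?_⟩
      have h := horb t (-t) ht ω₁ ω₂
      rwa [add_neg_cancel] at h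
    have hbound : ∀ t : ℝ, 0 ≤ t →
        EMetric.infEdist (ψ 0 ω₁ ω₂) (A ω₁ ω₂) ≤
          hausSemidist (Φ t (θ₁ (-t) ω₁) (θ₂ (-t) ω₂) ''
            D (θ₁ (-t) ω₁) (θ₂ (-t) ω₂)) (A ω₁ ω₂) := by
      intro t ht
      simp only [hausSemidist]
      exact le_iSup₂ (f := fun y (_ : y ∈ Φ t (θ₁ (-t) ω₁) (θ₂ (-t) ω₂) ''
        D (θ₁ (-t) ω₁) (θ₂ (-t) ω₂)) => EMetric.infEdist y (A ω₁ ω₂)) _ (key t ht)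
    have hlim := hA.attracts D hD ω₁ ω₂
    have hzero : EMetric.infEdist (ψ 0 ω₁ ω₂) (A ω₁ ω₂) = 0 := by
      have hle : EMetric.infEdist (ψ 0 ω₁ ω₂) (A ω₁ ω₂) ≤ 0 :=
        ge_of_tendsto hlim (eventually_atTop.2 ⟨0, fun t ht => hbound t ht⟩)
      exact le_antisymm hle zero_le
    have := EMetric.mem_closure_iff_infEdist_zero.2 hzero
    rwa [hAcl.closure_eq] at this


end RDS
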